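/- Suppose X is Hermitian with R_X invertible, F ∈ ℂ^{m×n} satisfies ρ(Ā_F A_F) < 1 with A_F = A − BF, and there exists a positive semidefinite Hermitian Y with C_{T_X}(Y) ≥ K_F(X), where T_X = A − BF_X. If in addition R_X > 0 (so K_F(X) ≥ 0), then ρ(T̄_X T_X) < 1. -/

import Mathlib

open Matrix
open scoped ComplexOrder

noncomputable section

/-- Entrywise complex conjugation of a matrix. -/
def mconj {k l : ℕ} (M : Matrix (Fin k) (Fin l) ℂ) : Matrix (Fin k) (Fin l) ℂ :=
  M.map (starRingEnd ℂ)

variable {n m : ℕ}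

/-- `R_X = R + Bᴴ X̄ B`. -/
def Rx (B : Matrix (Fin n) (Fin m) ℂ) (R : Matrix (Fin m) (Fin m) ℂ)
    (X : Matrix (Fin n) (Fin n) ℂ) : Matrix (Fin m) (Fin m) ℂ :=
  R + Bᴴ * mconj X * B

/-- The CDARE operator `R(X) = Aᴴ X̄ A − Aᴴ X̄ B R_X⁻¹ Bᴴ X̄ A + H`. -/
def Ric (A : Matrix (Fin n) (Fin n) ℂ) (B : Matrix (Fin n) (Fin m) ℂ)
    (R : Matrix (Fin m) (Fin m) ℂ) (H X : Matrix (Fin n) (Fin n) ℂ) :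
    Matrix (Fin n) (Fin n) ℂ :=
  Aᴴ * mconj X * A - Aᴴ * mconj X * B * (Rx B R X)⁻¹ * (Bᴴ * mconj X * A) + H

/-- `F_X = R_X⁻¹ Bᴴ X̄ A`. -/
def Fx (A : Matrix (Fin n) (Fin n) ℂ) (B : Matrix (Fin n) (Fin m) ℂ)
    (R : Matrix (Fin m) (Fin m) ℂ) (X : Matrix (Fin n) (Fin n) ℂ) :
    Matrix (Fin m) (Fin n) ℂ :=
  (Rx B R X)⁻¹ * (Bᴴ * mconj X * A)

/-- `T_X = A − B F_X`. -/
def Tx (A : Matrix (Fin n) (Fin n) ℂ) (B : Matrix (Fin n) (Fin m) ℂ)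
    (R : Matrix (Fin m) (Fin m) ℂ) (X : Matrix (Fin n) (Fin n) ℂ) :
    Matrix (Fin n) (Fin n) ℂ :=
  A - B * Fx A B R X

lemma mem_spec_iff {k : ℕ} (N : Matrix (Fin k) (Fin k) ℂ) (μ : ℂ) :
    μ ∈ spectrum ℂ N ↔ ∃ v, v ≠ 0 ∧ N *ᵥ v = μ • v := by
  rw [spectrum.mem_iff]
  rw [Matrix.isUnit_iff_isUnit_det, isUnit_iff_ne_zero, not_ne_iff,
    ← Matrix.exists_mulVec_eq_zero_iff]
  have h2 : ∀ v : Fin k → ℂ, (algebraMap ℂ _ μ) *ᵥ v = μ • v := by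
    intro v
    ext i; simp [Matrix.algebraMap_eq_diagonal, Matrix.mulVec, Matrix.diagonal, dotProduct]
  constructor
  · rintro ⟨v, hv, h⟩
    refine ⟨v, hv, ?_⟩
    rw [Matrix.sub_mulVec, h2, sub_eq_zero] at h
    exact h.symm
  · rintro ⟨v, hv, h⟩
    exact ⟨v, hv, by rw [Matrix.sub_mulVec, h, h2, sub_self]⟩

lemma mconj_mulVec {k l : ℕ} (M : Matrix (Fin k) (Fin l) ℂ) (v : Fin l → ℂ) :
    mconj M *ᵥ star v = star (M *ᵥ v) := by
  funext i
  simp only [Matrix.mulVec, dotProduct, mconj, Matrix.map_apply, Pi.star_apply]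
  rw [star_sum]
  congr 1 with j
  rw [star_mul']
  rfl

lemma quad_conj {k l : ℕ} (T : Matrix (Fin k) (Fin l) ℂ) (P : Matrix (Fin k) (Fin k) ℂ)
    (v : Fin l → ℂ) :
    star v ⬝ᵥ ((Tᴴ * P * T) *ᵥ v) = star (T *ᵥ v) ⬝ᵥ (P *ᵥ (T *ᵥ v)) := by
  rw [Matrix.star_mulVec, ← Matrix.dotProduct_mulVec, ← Matrix.mulVec_mulVec,
    ← Matrix.mulVec_mulVec]

lemma quad_mconj {k : ℕ} (P : Matrix (Fin k) (Fin k) ℂ) (v : Fin k → ℂ) :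
    star (star v) ⬝ᵥ (mconj P *ᵥ star v) = star (star v ⬝ᵥ (P *ᵥ v)) := by
  rw [mconj_mulVec, star_star]
  simp only [dotProduct, Pi.star_apply, star_sum, star_mul']
  congr 1 with j
  rw [star_star, mul_comm]

theorem stmt5 (n m : ℕ) (A : Matrix (Fin n) (Fin n) ℂ) (B : Matrix (Fin n) (Fin m) ℂ)
    (R : Matrix (Fin m) (Fin m) ℂ) (H X : Matrix (Fin n) (Fin n) ℂ)
    (F : Matrix (Fin m) (Fin n) ℂ)
    (hR : R.IsHermitian) (hRu : IsUnit R) (hH : H.IsHermitian) (hX : X.IsHermitian)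
    (hRx : IsUnit (Rx B R X))
    (hF : ∀ μ ∈ spectrum ℂ (mconj (A - B * F) * (A - B * F)), ‖μ‖ < 1)
    (hY : ∃ Y : Matrix (Fin n) (Fin n) ℂ, Y.PosSemidef ∧
      ((Y - (Tx A B R X)ᴴ * mconj Y * Tx A B R X) -
        (F - Fx A B R X)ᴴ * Rx B R X * (F - Fx A B R X)).PosSemidef)
    (hRxpos : (Rx B R X).PosDef) :
    ∀ μ ∈ spectrum ℂ (mconj (Tx A B R X) * Tx A B R X), ‖μ‖ < 1 := by
  intro μ hμ
  by_contra hlt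
  push_neg at hlt
  obtain ⟨Y, hYpsd, hQ⟩ := hY
  set T : Matrix (Fin n) (Fin n) ℂ := Tx A B R X with hT
  set M : Matrix (Fin m) (Fin n) ℂ := F - Fx A B R X with hM
  set Rx' : Matrix (Fin m) (Fin m) ℂ := Rx B R X with hRx'
  set K : Matrix (Fin n) (Fin n) ℂ := Mᴴ * Rx' * M with hK
  obtain ⟨x, hx0, hxe⟩ := (mem_spec_iff _ μ).1 hμ
  set y : Fin n → ℂ := T *ᵥ x with hy
  -- mconj T *ᵥ y = μ • x
  have hTy : mconj T *ᵥ y = μ • x := by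
    rw [hy, Matrix.mulVec_mulVec]; exact hxe
  -- T *ᵥ (star y) = star μ • star x
  have hTsy : T *ᵥ star y = star μ • star x := by
    have h1 : mconj T *ᵥ star (star y) = star (T *ᵥ star y) := mconj_mulVec T (star y)
    rw [star_star] at h1
    rw [hTy] at h1
    have := congrArg star h1
    rw [star_star, star_smul] at this
    exact this.symm
  -- the scalars
  set a : ℂ := star x ⬝ᵥ (Y *ᵥ x) with ha'
  set b : ℂ := y ⬝ᵥ (Y *ᵥ star y) with hb'
  set k1 : ℂ := star x ⬝ᵥ (K *ᵥ x) with hk1'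
  set k2 : ℂ := y ⬝ᵥ (K *ᵥ star y) with hk2'
  have ha : 0 ≤ a := hYpsd.dotProduct_mulVec_nonneg x
  have hb : 0 ≤ b := by
    have h := hYpsd.dotProduct_mulVec_nonneg (star y)
    simpa only [star_star, ← hb'] using h
  have hsa : star a = a := (IsSelfAdjoint.of_nonneg ha).star_eq
  have hsb : star b = b := (IsSelfAdjoint.of_nonneg hb).star_eq
  have hk1 : 0 ≤ k1 := by
    rw [hk1', hK, quad_conj]
    exact hRxpos.posSemidef.dotProduct_mulVec_nonneg (M *ᵥ x)
  have hk2 : 0 ≤ k2 := by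
    have hq := quad_conj M Rx' (star y)
    simp only [star_star] at hq
    rw [hk2', hK, hq]
    exact hRxpos.posSemidef.dotProduct_mulVec_nonneg (M *ᵥ star y)
  -- first inequality
  have hs1 : 0 ≤ a - b - k1 := by
    have h := hQ.dotProduct_mulVec_nonneg x
    rw [Matrix.sub_mulVec, Matrix.sub_mulVec, dotProduct_sub, dotProduct_sub] at h
    have hmid : star x ⬝ᵥ ((Tᴴ * mconj Y * T) *ᵥ x) = b := by
      rw [quad_conj, ← hy]
      have h2 := quad_mconj Y (star y)
      simp only [star_star] at h2
      rw [h2, ← hb', hsb]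
    rw [hmid] at h
    exact h
  -- second inequality
  have hs2 : 0 ≤ b - ((Complex.normSq μ : ℝ) : ℂ) * a - k2 := by
    have h := hQ.dotProduct_mulVec_nonneg (star y)
    rw [Matrix.sub_mulVec, Matrix.sub_mulVec, dotProduct_sub, dotProduct_sub] at h
    simp only [star_star] at h
    have hmid : y ⬝ᵥ ((Tᴴ * mconj Y * T) *ᵥ star y) =
        ((Complex.normSq μ : ℝ) : ℂ) * a := by
      have hq := quad_conj T (mconj Y) (star y)
      simp only [star_star] at hq
      rw [hq, hTsy]
      rw [star_smul, Matrix.mulVec_smul, dotProduct_smul,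
        smul_dotProduct]
      have h2 := quad_mconj Y x
      simp only [star_star] at h2
      simp only [star_star]
      rw [h2, ← ha', hsa, smul_eq_mul, smul_eq_mul, ← mul_assoc]
      congr 1
      rw [Complex.star_def, mul_comm, Complex.mul_conj]
    rw [hmid] at h
    exact h
  -- combine
  set c : ℂ := ((Complex.normSq μ : ℝ) : ℂ) with hc'
  have hc1 : (1 : ℂ) ≤ c := by
    rw [hc', ← Complex.ofReal_one, Complex.real_le_real]
    have : 1 ≤ ‖μ‖ := hlt
    have h2 : Complex.normSq μ = ‖μ‖ ^ 2 := by
      rw [Complex.sq_norm]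
    rw [h2]; nlinarith
  have hsum : 0 ≤ (a - c * a) - (k1 + k2) := by
    have h := add_nonneg hs1 hs2
    have heq : (a - b - k1) + (b - c * a - k2) = (a - c * a) - (k1 + k2) := by ring
    rwa [heq] at h
  have hca : a - c * a ≤ 0 := by
    have h1 : 0 ≤ (c - 1) * a := mul_nonneg (sub_nonneg.mpr hc1) ha
    have h2 : a - c * a = -((c - 1) * a) := by ring
    rw [h2]
    exact neg_nonpos.mpr h1
  have hk12 : k1 + k2 ≤ 0 :=
    le_trans (sub_nonneg.mp hsum) hca
  have hk1z : k1 = 0 :=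
    le_antisymm (le_trans (le_add_of_nonneg_right hk2) hk12) hk1
  have hk2z : k2 = 0 :=
    le_antisymm (le_trans (le_add_of_nonneg_left hk1) hk12) hk2
  -- M *ᵥ x = 0 and M *ᵥ star y = 0
  have hMx : M *ᵥ x = 0 := by
    by_contra h
    have := hRxpos.dotProduct_mulVec_pos h
    rw [hk1', hK, quad_conj] at hk1z
    rw [hk1z] at this
    exact lt_irrefl 0 this
  have hMsy : M *ᵥ star y = 0 := by
    by_contra h
    have := hRxpos.dotProduct_mulVec_pos h
    have hq := quad_conj M Rx' (star y)
    simp only [star_star] at hq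
    rw [hk2', hK, hq] at hk2z
    rw [hk2z] at this
    exact lt_irrefl 0 this
  -- A_F = T - B * M
  set AF : Matrix (Fin n) (Fin n) ℂ := A - B * F with hAF'
  have hAFT : AF = T - B * M := by
    rw [hAF', hT, hM, Tx, Matrix.mul_sub]
    abel
  have hAFx : AF *ᵥ x = y := by
    rw [hAFT, Matrix.sub_mulVec, ← Matrix.mulVec_mulVec, hMx, Matrix.mulVec_zero, sub_zero, hy]
  have hAFsy : AF *ᵥ star y = star μ • star x := by
    rw [hAFT, Matrix.sub_mulVec, ← Matrix.mulVec_mulVec, hMsy, Matrix.mulVec_zero, sub_zero,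
      hTsy]
  -- μ is an eigenvalue of mconj AF * AF
  have heig : (mconj AF * AF) *ᵥ x = μ • x := by
    rw [← Matrix.mulVec_mulVec, hAFx]
    have h1 : mconj AF *ᵥ star (star y) = star (AF *ᵥ star y) := mconj_mulVec AF (star y)
    rw [star_star] at h1
    rw [h1, hAFsy, star_smul, star_star, star_star]
  have hspec : μ ∈ spectrum ℂ (mconj AF * AF) := (mem_spec_iff _ μ).2 ⟨x, hx0, heig⟩
  exact absurd (hF μ hspec) (not_lt.mpr hlt)
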